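/- Let m ≥ 2, n ≥ 2, and ε ∈ {1,-1}. The number of (2n+1)-tuples (a_1,...,a_{2n+1}) in (Z/2^m Z)^{2n+1} with M_{2n+1}(a_1,...,a_{2n+1}) = ε·Id equals 2^{2mn-2n-2m-1}(2^{2n+3} - 8)/3. -/

import Mathlib

open Matrix

def matM {A : Type*} [CommRing A] (x : A) : Matrix (Fin 2) (Fin 2) A := !![x, -1; 1, 0]

def Mn {A : Type*} [CommRing A] {n : ℕ} (a : Fin n → A) : Matrix (Fin 2) (Fin 2) A :=
  ((List.ofFn fun i => matM (a i)).reverse).prod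

namespace S16

variable {R : Type*} [CommRing R]

lemma Mn_zero (a : Fin 0 → R) : Mn a = 1 := by simp [Mn]

lemma Mn_snoc {j : ℕ} (b : Fin j → R) (x : R) :
    Mn (Fin.snoc b x) = matM x * Mn b := by
  unfold Mn
  rw [List.ofFn_succ']
  simp [List.reverse_concat, Fin.snoc_castSucc, Fin.snoc_last]

lemma det_matM (x : R) : (matM x).det = 1 := by
  simp [matM, Matrix.det_fin_two_of]

lemma det_Mn : ∀ {j : ℕ} (a : Fin j → R), (Mn a).det = 1 := by
  intro j
  induction j with
  | zero => intro a; simp [Mn_zero]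
  | succ j ih =>
    intro a
    rw [← Fin.snoc_init_self a, Mn_snoc, Matrix.det_mul, det_matM, ih, one_mul]

lemma matM_mul (x : R) (P : Matrix (Fin 2) (Fin 2) R) :
    matM x * P = !![x * P 0 0 - P 1 0, x * P 0 1 - P 1 1; P 0 0, P 0 1] := by
  ext i jj
  fin_cases i <;> fin_cases jj <;>
    simp [matM, Matrix.mul_apply, Fin.sum_univ_two] <;> ring

lemma Mn_one_apply (a : Fin 1 → R) : Mn a = matM (a 0) := by
  have h : Mn (Fin.snoc (fun i : Fin 0 => a i.elim0) (a 0)) = matM (a 0) := by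
    rw [Mn_snoc, Mn_zero, mul_one]
  have h2 : Fin.snoc (fun i : Fin 0 => a i.elim0) (a 0) = a := by
    funext i
    have hi : i = Fin.last 0 := by omega
    subst hi
    rw [Fin.snoc_last]
    rfl
  rwa [h2] at h


lemma Mn_map {S : Type*} [CommRing S] (f : R →+* S) : ∀ {j : ℕ} (a : Fin j → R),
    (Mn a).map f = Mn (fun i => f (a i)) := by
  intro j
  induction j with
  | zero =>
    intro a
    rw [Mn_zero, Mn_zero]
    exact Matrix.map_one f (map_zero f) (map_one f)
  | succ j ih =>
    intro a
    rw [← Fin.snoc_init_self a, Mn_snoc, Matrix.map_mul, ih]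
    have hM : (matM (a (Fin.last j))).map f = matM (f (a (Fin.last j))) := by
      ext i jj
      fin_cases i <;> fin_cases jj <;>
        simp [matM, Matrix.map_apply]
    rw [hM]
    have : (fun i => f (Fin.snoc (Fin.init a) (a (Fin.last j)) i))
        = Fin.snoc (fun i => f (Fin.init a i)) (f (a (Fin.last j))) := by
      exact Fin.comp_snoc f (Fin.init a) (a (Fin.last j))
    rw [this, Mn_snoc]

section Counting

variable (R) [Fintype R] [DecidableEq R]

def cnt (j : ℕ) (u v : R) : ℕ :=
  (Finset.univ.filter fun a : Fin j → R => Mn a 0 0 = u ∧ Mn a 1 0 = v).card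

def fib (j : ℕ) (u : R) : ℕ :=
  (Finset.univ.filter fun a : Fin j → R => Mn a 0 0 = u).card

variable {R}

lemma fib_eq_sum (j : ℕ) (u : R) : fib R j u = ∑ v : R, cnt R j u v := by
  rw [fib, Finset.card_eq_sum_card_fiberwise
    (f := fun a : Fin j → R => Mn a 1 0) (t := Finset.univ) (fun _ _ => Finset.mem_univ _)]
  apply Finset.sum_congr rfl
  intro v _
  rw [cnt, Finset.filter_filter]

def snocEquiv (j : ℕ) : ((Fin j → R) × R) ≃ (Fin (j+1) → R) where
  toFun p := Fin.snoc p.1 p.2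
  invFun a := (Fin.init a, a (Fin.last j))
  left_inv p := by simp [Fin.init_snoc, Fin.snoc_last]
  right_inv a := by simp [Fin.snoc_init_self]

lemma card_filter_succ (j : ℕ) (P : (Fin (j+1) → R) → Prop) [DecidablePred P] :
    (Finset.univ.filter P).card
      = ∑ x : R, (Finset.univ.filter fun b : Fin j → R => P (Fin.snoc b x)).card := by
  rw [Finset.card_filter]
  rw [← Equiv.sum_comp (snocEquiv (R := R) j) (fun a => if P a then 1 else 0)]
  rw [Fintype.sum_prod_type_right]
  apply Finset.sum_congr rfl
  intro x _
  rw [Finset.card_filter]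
  rfl

lemma cnt_succ (j : ℕ) (u v : R) :
    cnt R (j+1) u v = ∑ x : R, cnt R j v (x * v - u) := by
  rw [cnt, card_filter_succ]
  apply Finset.sum_congr rfl
  intro x _
  rw [cnt]
  congr 1
  ext b
  simp only [Finset.mem_filter, Finset.mem_univ, true_and]
  rw [Mn_snoc, matM_mul]
  norm_num [Matrix.cons_val_zero, Matrix.cons_val_one, Matrix.head_cons]
  constructor
  · rintro ⟨h1, h2⟩
    refine ⟨h2, ?_⟩
    rw [h2] at h1
    linear_combination -h1
  · rintro ⟨h1, h2⟩
    refine ⟨?_, h1⟩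
    rw [h1, h2]
    ring

lemma cnt_unit (j : ℕ) (u v : R) (hv : IsUnit v) : cnt R (j+1) u v = fib R j v := by
  rw [cnt_succ, fib_eq_sum]
  have hv1 : v * ↑hv.unit⁻¹ = 1 := by
    nth_rewrite 1 [← hv.unit_spec]
    exact_mod_cast hv.unit.mul_inv
  have hv2 : (↑hv.unit⁻¹ : R) * v = 1 := by
    nth_rewrite 2 [← hv.unit_spec]
    exact_mod_cast hv.unit.inv_mul
  apply Fintype.sum_bijective (fun x : R => x * v - u)
  · rw [Function.bijective_iff_has_inverse]
    refine ⟨fun w => (w + u) * ↑hv.unit⁻¹, fun x => ?_, fun w => ?_⟩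
    · simp only [sub_add_cancel, mul_assoc, hv1, mul_one]
    · simp only [mul_assoc, hv2, mul_one, add_sub_cancel_right]
  · intro x
    rfl

lemma cnt_00 [Nontrivial R] (j : ℕ) : cnt R j 0 0 = 0 := by
  rw [cnt, Finset.card_eq_zero, Finset.filter_eq_empty_iff]
  rintro a -
  rintro ⟨h1, h2⟩
  have hd := det_Mn a
  rw [Matrix.det_fin_two, h1, h2] at hd
  simp at hd

lemma fib_one (u : R) : fib R 1 u = 1 := by
  rw [fib]
  rw [Finset.card_eq_one]
  refine ⟨fun _ => u, ?_⟩
  ext a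
  simp only [Finset.mem_filter, Finset.mem_univ, true_and, Finset.mem_singleton]
  rw [Mn_one_apply]
  constructor
  · intro h
    funext i
    have : i = 0 := by omega
    subst this
    simpa [matM] using h
  · intro h
    subst h
    simp [matM]

lemma sum_fib (j : ℕ) : ∑ u : R, fib R j u = Fintype.card R ^ j := by
  have : (Finset.univ : Finset (Fin j → R)).card = ∑ u : R, fib R j u := by
    rw [Finset.card_eq_sum_card_fiberwise
      (f := fun a : Fin j → R => Mn a 0 0) (t := Finset.univ) (fun _ _ => Finset.mem_univ _)]
    rfl
  rw [← this, Finset.card_univ, Fintype.card_fun, Fintype.card_fin]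

end Counting

section Zmod2

def pp (j : ℕ) : ℕ := fib (ZMod 2) j 1
def zz (j : ℕ) : ℕ := fib (ZMod 2) j 0

lemma univ_zmod2 : (Finset.univ : Finset (ZMod 2)) = {0, 1} := by decide

lemma sum_zmod2 (f : ZMod 2 → ℕ) : ∑ u : ZMod 2, f u = f 0 + f 1 := by
  rw [univ_zmod2, Finset.sum_insert (by decide), Finset.sum_singleton]

lemma zz_add_pp (j : ℕ) : zz j + pp j = 2 ^ j := by
  have := sum_fib (R := ZMod 2) j
  rw [sum_zmod2] at this
  rw [zz, pp, this, ZMod.card]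

lemma pp_rec (j : ℕ) : pp (j+1) = 2 * zz j + pp j := by
  rw [pp, fib_eq_sum, sum_zmod2]
  have h1 : cnt (ZMod 2) (j+1) 1 1 = pp j := cnt_unit j 1 1 isUnit_one
  have h0 : cnt (ZMod 2) (j+1) 1 0 = 2 * zz j := by
    rw [cnt_succ]
    have : ∀ x : ZMod 2, x * 0 - 1 = 1 := by decide
    calc ∑ x : ZMod 2, cnt (ZMod 2) j 0 (x * 0 - 1)
        = ∑ _x : ZMod 2, cnt (ZMod 2) j 0 1 := by
          apply Finset.sum_congr rfl; intro x _; rw [this x]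
      _ = 2 * cnt (ZMod 2) j 0 1 := by
          rw [Finset.sum_const, Finset.card_univ, ZMod.card, smul_eq_mul]
      _ = 2 * zz j := by
          congr 1
          have := fib_eq_sum (R := ZMod 2) j 0
          rw [sum_zmod2, cnt_00] at this
          rw [zz, this, zero_add]
  rw [h0, h1]

lemma pp_add (j : ℕ) : pp (j+1) + pp j = 2 ^ (j+1) := by
  rw [pp_rec]
  have := zz_add_pp j
  ring_nf
  omega

lemma pp_zero : pp 0 = 1 := by
  rw [pp, fib]
  have : ∀ a : Fin 0 → ZMod 2, Mn a 0 0 = 1 := by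
    intro a; rw [Mn_zero]; exact Matrix.one_apply_eq 0
  rw [Finset.filter_true_of_mem (fun a _ => this a), Finset.card_univ]
  simp

lemma pp_int (j : ℕ) : 3 * (pp j : ℤ) = 2 ^ (j+1) + (-1) ^ j := by
  induction j with
  | zero => rw [pp_zero]; norm_num
  | succ j ih =>
    have h := pp_add j
    have h' : (pp (j+1) : ℤ) + pp j = 2 ^ (j+1) := by exact_mod_cast h
    linear_combination 3 * h' - ih

end Zmod2

section ZmodPow

open Finset

variable (m' : ℕ)

instance : NeZero (2 ^ (m' + 1)) := ⟨by positivity⟩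

abbrev AA (m' : ℕ) := ZMod (2 ^ (m' + 1))

def pi2 : AA m' →+* ZMod 2 := ZMod.castHom (dvd_pow_self 2 (Nat.succ_ne_zero m')) (ZMod 2)

lemma zmod2_cases (c : ZMod 2) : c = 0 ∨ c = 1 := by revert c; decide

lemma card_fiber (c : ZMod 2) :
    (Finset.univ.filter fun t : AA m' => pi2 m' t = c).card = 2 ^ m' := by
  have key : (Finset.univ.filter fun t : AA m' => pi2 m' t = 0).card
      = (Finset.univ.filter fun t : AA m' => pi2 m' t = 1).card := by
    apply Finset.card_bij (fun t _ => t + 1)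
    · intro t ht
      simp only [Finset.mem_filter, Finset.mem_univ, true_and] at ht ⊢
      rw [map_add, ht, _root_.map_one, zero_add]
    · intro a _ b _ h
      exact add_right_cancel h
    · intro w hw
      simp only [Finset.mem_filter, Finset.mem_univ, true_and] at hw ⊢
      refine ⟨w - 1, ?_, by ring⟩
      rw [map_sub, hw, _root_.map_one, sub_self]
  have hnot : (Finset.univ.filter fun t : AA m' => ¬ pi2 m' t = 0)
      = (Finset.univ.filter fun t : AA m' => pi2 m' t = 1) := by
    apply Finset.filter_congr
    intro t _
    have : ∀ y : ZMod 2, ¬y = 0 ↔ y = 1 := by decide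
    exact this (pi2 m' t)
  have tot : (Finset.univ.filter fun t : AA m' => pi2 m' t = 0).card
      + (Finset.univ.filter fun t : AA m' => pi2 m' t = 1).card = 2 ^ (m' + 1) := by
    have h := Finset.card_filter_add_card_filter_not
      (s := (Finset.univ : Finset (AA m'))) (p := fun t => pi2 m' t = 0)
    rw [Finset.card_univ, ZMod.card, hnot] at h
    exact h
  have hpow : 2 ^ (m' + 1) = 2 * 2 ^ m' := by ring
  rcases zmod2_cases c with rfl | rfl <;> omega

lemma card_fun_fiber (j : ℕ) (b : Fin j → ZMod 2) :
    (Finset.univ.filter fun a : Fin j → AA m' => (fun i => pi2 m' (a i)) = b).card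
      = 2 ^ (m' * j) := by
  rw [← Fintype.card_subtype]
  have e1 : {a : Fin j → AA m' // (fun i => pi2 m' (a i)) = b}
      ≃ ∀ i : Fin j, {t : AA m' // pi2 m' t = b i} :=
    (Equiv.subtypeEquivRight (fun a => funext_iff)).trans (Equiv.subtypePiEquivPi (p := fun (i : Fin j) (t : AA m') => pi2 m' t = b i))
  rw [Fintype.card_congr e1, Fintype.card_pi]
  have : ∀ i : Fin j, Fintype.card {t : AA m' // pi2 m' t = b i} = 2 ^ m' := by
    intro i
    rw [Fintype.card_subtype, card_fiber]
  rw [Finset.prod_congr rfl (fun i _ => this i), Finset.prod_const, Finset.card_univ,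
    Fintype.card_fin, ← pow_mul]

lemma pi2_Mn {j : ℕ} (a : Fin j → AA m') (b : Fin j → ZMod 2)
    (hb : (fun i => pi2 m' (a i)) = b) : pi2 m' (Mn a 0 0) = Mn b 0 0 := by
  have := Mn_map (pi2 m') a
  rw [hb] at this
  rw [← this]
  rfl

def Ocnt (j : ℕ) : ℕ :=
  (Finset.univ.filter fun a : Fin j → AA m' => pi2 m' (Mn a 0 0) = 1).card

lemma Ocnt_eq (j : ℕ) : Ocnt m' j = 2 ^ (m' * j) * pp j := by
  rw [Ocnt, Finset.card_eq_sum_card_fiberwise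
    (f := fun a : Fin j → AA m' => fun i => pi2 m' (a i)) (t := Finset.univ)
    (fun _ _ => Finset.mem_univ _)]
  have key : ∀ b : Fin j → ZMod 2,
      ((Finset.univ.filter fun a : Fin j → AA m' => pi2 m' (Mn a 0 0) = 1).filter
        fun a => (fun i => pi2 m' (a i)) = b).card
      = if Mn b 0 0 = 1 then 2 ^ (m' * j) else 0 := by
    intro b
    rw [Finset.filter_filter]
    by_cases hb : Mn b 0 0 = 1
    · rw [if_pos hb, ← card_fun_fiber m' j b]
      congr 1
      apply Finset.filter_congr
      intro a _
      constructor
      · rintro ⟨_, h2⟩; exact h2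
      · intro h; exact ⟨by rw [pi2_Mn m' a b h, hb], h⟩
    · rw [if_neg hb, Finset.card_eq_zero, Finset.filter_eq_empty_iff]
      rintro a - ⟨h1, h2⟩
      exact hb (by rw [← pi2_Mn m' a b h2, h1])
  rw [Finset.sum_congr rfl (fun b _ => key b), ← Finset.sum_filter, Finset.sum_const,
    smul_eq_mul, mul_comm]
  rfl

lemma Ocnt_eq_sum (j : ℕ) :
    Ocnt m' j = ∑ v ∈ Finset.univ.filter (fun v : AA m' => pi2 m' v = 1), fib (AA m') j v := by
  rw [Ocnt, Finset.card_eq_sum_card_fiberwise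
    (f := fun a : Fin j → AA m' => Mn a 0 0)
    (t := Finset.univ.filter (fun v : AA m' => pi2 m' v = 1)) ?_]
  · apply Finset.sum_congr rfl
    intro v hv
    simp only [Finset.mem_filter, Finset.mem_univ, true_and] at hv
    rw [fib, Finset.filter_filter]
    congr 1
    apply Finset.filter_congr
    intro a _
    constructor
    · rintro ⟨_, h2⟩; exact h2
    · intro h; exact ⟨by rw [h, hv], h⟩
  · intro a ha
    simp only [Finset.mem_coe, Finset.mem_filter, Finset.mem_univ, true_and] at ha ⊢
    exact ha

lemma isUnit_of_pi2 (u : AA m') (h : pi2 m' u = 1) : IsUnit u := by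
  have h2 : ((u.val : ℕ) : AA m') = u := by
    rw [ZMod.natCast_val, ZMod.cast_id]
  have h1 : ((u.val : ℕ) : ZMod 2) = 1 := by
    have : pi2 m' ((u.val : ℕ) : AA m') = ((u.val : ℕ) : ZMod 2) := by
      simp [pi2]
    rw [h2, h] at this
    exact this.symm
  have hodd : ¬ 2 ∣ u.val := by
    rintro ⟨c, hc⟩
    rw [hc] at h1
    push_cast at h1
    rw [show ((2 : ZMod 2)) = 0 from by decide, zero_mul] at h1
    exact one_ne_zero h1.symm
  have hco : Nat.Coprime u.val (2 ^ (m' + 1)) :=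
    Nat.Coprime.pow_right _ ((Nat.Prime.coprime_iff_not_dvd Nat.prime_two).mpr hodd).symm
  rw [← h2]
  exact (ZMod.isUnit_iff_coprime u.val (2 ^ (m' + 1))).mpr hco

lemma main_odd (k : ℕ) : ∀ u : AA m', pi2 m' u = 1 →
    3 * (fib (AA m') (2*k+1) u : ℤ) = 2 ^ (m' * (2*k)) * (2 ^ (2*k+2) - 1) := by
  induction k with
  | zero =>
    intro u hu
    rw [show 2*0+1 = 1 from by ring, fib_one]
    norm_num
  | succ k ih =>
    intro u hu
    rw [show 2*(k+1)+1 = 2*k+1+1+1 from by ring]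
    have hsplit : fib (AA m') (2*k+1+1+1) u
        = (∑ v ∈ Finset.univ.filter (fun v : AA m' => pi2 m' v = 1),
            cnt (AA m') (2*k+1+1+1) u v)
        + ∑ v ∈ Finset.univ.filter (fun v : AA m' => ¬ pi2 m' v = 1),
            cnt (AA m') (2*k+1+1+1) u v := by
      rw [fib_eq_sum, ← Finset.sum_filter_add_sum_filter_not Finset.univ
        (fun v : AA m' => pi2 m' v = 1)]
    have hA : (∑ v ∈ Finset.univ.filter (fun v : AA m' => pi2 m' v = 1),
        cnt (AA m') (2*k+1+1+1) u v) = Ocnt m' (2*k+1+1) := by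
      rw [Ocnt_eq_sum]
      apply Finset.sum_congr rfl
      intro v hv
      simp only [Finset.mem_filter, Finset.mem_univ, true_and] at hv
      exact cnt_unit _ u v (isUnit_of_pi2 m' v hv)
    have hB : ∀ v ∈ Finset.univ.filter (fun v : AA m' => ¬ pi2 m' v = 1),
        cnt (AA m') (2*k+1+1+1) u v = ∑ x : AA m', fib (AA m') (2*k+1) (x * v - u) := by
      intro v hv
      simp only [Finset.mem_filter, Finset.mem_univ, true_and] at hv
      have hv0 : pi2 m' v = 0 := by
        rcases zmod2_cases (pi2 m' v) with h | h
        · exact h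
        · exact absurd h hv
      rw [cnt_succ]
      apply Finset.sum_congr rfl
      intro x _
      apply cnt_unit
      apply isUnit_of_pi2
      rw [map_sub, _root_.map_mul, hv0, mul_zero, zero_sub, hu]
      decide
    rw [hsplit, hA, Finset.sum_congr rfl hB]
    have heven : (Finset.univ.filter (fun v : AA m' => ¬ pi2 m' v = 1)).card = 2 ^ m' := by
      rw [← card_fiber m' 0]
      congr 1
      apply Finset.filter_congr
      intro v _
      rcases zmod2_cases (pi2 m' v) with h | h <;> simp [h]
    -- now cast to ℤ
    have hOc := Ocnt_eq m' (2*k+1+1)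
    have hpp : 3 * (pp (2*k+1+1) : ℤ) = 2 ^ (2*k+3) + 1 := by
      have := pp_int (2*k+1+1)
      rw [show (-1 : ℤ) ^ (2*k+1+1) = 1 from Even.neg_one_pow ⟨k+1, by ring⟩] at this
      rw [this]
    push_cast
    rw [mul_add]
    have hBsum : (3 : ℤ) * ∑ v ∈ Finset.univ.filter (fun v : AA m' => ¬ pi2 m' v = 1),
        (∑ x : AA m', (fib (AA m') (2*k+1) (x * v - u) : ℤ))
        = 2 ^ m' * (2 ^ (m'+1) * (2 ^ (m' * (2*k)) * (2 ^ (2*k+2) - 1))) := by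
      rw [Finset.mul_sum]
      have : ∀ v ∈ Finset.univ.filter (fun v : AA m' => ¬ pi2 m' v = 1),
          (3 : ℤ) * ∑ x : AA m', (fib (AA m') (2*k+1) (x * v - u) : ℤ)
          = 2 ^ (m'+1) * (2 ^ (m' * (2*k)) * (2 ^ (2*k+2) - 1)) := by
        intro v hv
        simp only [Finset.mem_filter, Finset.mem_univ, true_and] at hv
        have hv0 : pi2 m' v = 0 := by
          rcases zmod2_cases (pi2 m' v) with h | h
          · exact h
          · exact absurd h hv
        rw [Finset.mul_sum]
        have hx : ∀ x : AA m', (3 : ℤ) * (fib (AA m') (2*k+1) (x * v - u) : ℤ)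
            = 2 ^ (m' * (2*k)) * (2 ^ (2*k+2) - 1) := by
          intro x
          apply ih
          rw [map_sub, _root_.map_mul, hv0, mul_zero, zero_sub, hu]
          decide
        rw [Finset.sum_congr rfl (fun x _ => hx x), Finset.sum_const, Finset.card_univ,
          ZMod.card, nsmul_eq_mul]
        push_cast
        ring
      rw [Finset.sum_congr rfl this, Finset.sum_const, heven, nsmul_eq_mul]
      push_cast
      ring
    rw [hBsum, hOc]
    push_cast
    have h3 : (3 : ℤ) * (2 ^ (m' * (2*k+1+1)) * (pp (2*k+1+1) : ℤ))
        = 2 ^ (m' * (2*k+1+1)) * (2 ^ (2*k+3) + 1) := by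
      rw [← mul_assoc, mul_comm (3:ℤ), mul_assoc, hpp]
    rw [h3]
    ring

end ZmodPow

section Top

variable {R : Type*} [CommRing R] [Fintype R] [DecidableEq R]

lemma smul_one_eq (ε : R) : ε • (1 : Matrix (Fin 2) (Fin 2) R) = !![ε, 0; 0, ε] := by
  ext i j
  fin_cases i <;> fin_cases j <;> simp [Matrix.smul_apply, Matrix.one_apply]

lemma pair_iff (ε : R) (hε : ε * ε = 1) (P : Matrix (Fin 2) (Fin 2) R) (hP : P.det = 1)
    (x y : R) :
    matM y * (matM x * P) = ε • 1 ↔ (P 0 0 = -ε ∧ x = -ε * P 1 0 ∧ y = ε * P 0 1) := by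
  rw [Matrix.det_fin_two] at hP
  rw [smul_one_eq, matM_mul, matM_mul]
  rw [← Matrix.ext_iff]
  simp only [Fin.forall_fin_two]
  norm_num [Matrix.cons_val_zero, Matrix.cons_val_one, Matrix.head_cons]
  constructor
  · rintro ⟨⟨E1, E2⟩, E3, E4⟩
    have hp : P 0 0 = -ε := by linear_combination y * E3 - E1
    refine ⟨hp, ?_, ?_⟩
    · linear_combination (-ε) * E3 + ε * x * hp - x * hε
    · linear_combination ε * E2 - ε * y * E4 - y * hε
  · rintro ⟨hp, rfl, rfl⟩
    refine ⟨⟨?_, ?_⟩, ?_, ?_⟩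
    · linear_combination (-ε*ε*(P 0 1)*(P 1 0) - 1) * hp + (ε*(P 0 1)*(P 1 0)) * hε
    · linear_combination (P 0 1) * hP - (P 0 1)*(P 1 1) * hp - (P 0 1)^2*(P 1 0) * hε
    · linear_combination (-ε*(P 1 0)) * hp + (P 1 0) * hε
    · linear_combination ε * hP - ε*(P 1 1) * hp + (P 1 1) * hε

lemma pair_count (ε : R) (hε : ε * ε = 1) (P : Matrix (Fin 2) (Fin 2) R) (hP : P.det = 1) :
    (Finset.univ.filter fun xy : R × R => matM xy.2 * (matM xy.1 * P) = ε • 1).card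
      = if P 0 0 = -ε then 1 else 0 := by
  by_cases h : P 0 0 = -ε
  · rw [if_pos h, Finset.card_eq_one]
    refine ⟨(-ε * P 1 0, ε * P 0 1), ?_⟩
    ext xy
    simp only [Finset.mem_filter, Finset.mem_univ, true_and, Finset.mem_singleton]
    rw [pair_iff ε hε P hP]
    constructor
    · rintro ⟨-, h2, h3⟩
      apply Prod.ext
      · simpa [neg_mul] using h2
      · simpa using h3
    · rintro rfl
      exact ⟨h, by simp [neg_mul], rfl⟩
  · rw [if_neg h, Finset.card_eq_zero, Finset.filter_eq_empty_iff]
    rintro xy -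
    rw [pair_iff ε hε P hP]
    rintro ⟨h1, -, -⟩
    exact h h1

lemma top_count (j : ℕ) (ε : R) (hε : ε * ε = 1) :
    (Finset.univ.filter fun a : Fin (j+1+1) → R => Mn a = ε • 1).card = fib R j (-ε) := by
  have step2 : ∀ y : R,
      (Finset.univ.filter fun c : Fin (j+1) → R => Mn (Fin.snoc c y) = ε • 1).card
      = ∑ x : R, ∑ b : Fin j → R,
          if matM y * (matM x * Mn b) = ε • (1 : Matrix (Fin 2) (Fin 2) R) then 1 else 0 := by
    intro y
    rw [card_filter_succ]
    apply Finset.sum_congr rfl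
    intro x _
    rw [Finset.card_filter]
    apply Finset.sum_congr rfl
    intro b _
    congr 1
    rw [Mn_snoc, Mn_snoc]
  have inner : ∀ b : Fin j → R,
      (∑ x : R, ∑ y : R,
        if matM y * (matM x * Mn b) = ε • (1 : Matrix (Fin 2) (Fin 2) R) then 1 else 0)
      = if Mn b 0 0 = -ε then 1 else 0 := by
    intro b
    rw [← pair_count ε hε (Mn b) (det_Mn b), Finset.card_filter, Fintype.sum_prod_type]
  calc (Finset.univ.filter fun a : Fin (j+1+1) → R => Mn a = ε • 1).card
      = ∑ y : R, ∑ x : R, ∑ b : Fin j → R,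
          (if matM y * (matM x * Mn b) = ε • (1 : Matrix (Fin 2) (Fin 2) R) then 1 else 0) := by
        rw [card_filter_succ]
        exact Finset.sum_congr rfl (fun y _ => step2 y)
    _ = ∑ y : R, ∑ b : Fin j → R, ∑ x : R,
          (if matM y * (matM x * Mn b) = ε • (1 : Matrix (Fin 2) (Fin 2) R) then 1 else 0) :=
        Finset.sum_congr rfl (fun y _ => Finset.sum_comm)
    _ = ∑ b : Fin j → R, ∑ y : R, ∑ x : R,
          (if matM y * (matM x * Mn b) = ε • (1 : Matrix (Fin 2) (Fin 2) R) then 1 else 0) :=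
        Finset.sum_comm
    _ = ∑ b : Fin j → R, ∑ x : R, ∑ y : R,
          (if matM y * (matM x * Mn b) = ε • (1 : Matrix (Fin 2) (Fin 2) R) then 1 else 0) :=
        Finset.sum_congr rfl (fun b _ => Finset.sum_comm)
    _ = ∑ b : Fin j → R, (if Mn b 0 0 = -ε then 1 else 0) :=
        Finset.sum_congr rfl (fun b _ => inner b)
    _ = fib R j (-ε) := (Finset.card_filter _ _).symm

end Top

end S16

open S16 in
theorem stmt16 (m : ℕ) (hm : 2 ≤ m) (n : ℕ) (hn : 2 ≤ n)
    (ε : ZMod (2 ^ m)) (hε : ε = 1 ∨ ε = -1) :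
    (Nat.card {a : Fin (2 * n + 1) → ZMod (2 ^ m) //
        Mn a = ε • (1 : Matrix (Fin 2) (Fin 2) (ZMod (2 ^ m)))} : ℚ) =
      2 ^ (2 * (m : ℤ) * n - 2 * n - 2 * m - 1) * (2 ^ (2 * n + 3) - 8) / 3 := by
  obtain ⟨k, rfl⟩ : ∃ k, n = k + 2 := ⟨n - 2, by omega⟩
  obtain ⟨m1, rfl⟩ : ∃ m1, m = m1 + 1 := ⟨m - 1, by omega⟩
  have hε2 : ε * ε = 1 := by rcases hε with rfl | rfl <;> ring
  have hcard : Nat.card {a : Fin (2 * (k+2) + 1) → ZMod (2^(m1+1)) //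
      Mn a = ε • (1 : Matrix (Fin 2) (Fin 2) (ZMod (2^(m1+1))))}
      = fib (ZMod (2^(m1+1))) (2*k+3) (-ε) := by
    rw [Nat.card_eq_fintype_card, Fintype.card_subtype]
    rw [show 2*(k+2)+1 = (2*k+3)+1+1 from by ring]
    exact top_count (2*k+3) ε hε2
  have hpi : pi2 m1 (-ε) = 1 := by
    rcases hε with rfl | rfl
    · rw [map_neg, _root_.map_one]
      decide
    · rw [neg_neg, _root_.map_one]
  have hval := main_odd m1 (k+1) (-ε) hpi
  rw [show 2*(k+1)+1 = 2*k+3 from by ring] at hval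
  rw [hcard]
  rw [eq_div_iff (by norm_num : (3:ℚ) ≠ 0)]
  have hQ : 3 * ((fib (ZMod (2^(m1+1))) (2*k+3) (-ε) : ℕ) : ℚ)
      = 2 ^ (m1*(2*(k+1))) * (2 ^ (2*(k+1)+2) - 1) := by
    exact_mod_cast hval
  have hpow : (2:ℚ) ^ (m1*(2*(k+1)))
      = 2 ^ (2 * ((m1+1 : ℕ) : ℤ) * ((k+2 : ℕ) : ℤ) - 2 * ((k+2 : ℕ) : ℤ)
          - 2 * ((m1+1 : ℕ) : ℤ) - 1) * 8 := by
    have hE : ((m1*(2*(k+1)) : ℕ) : ℤ)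
        = (2 * ((m1+1 : ℕ) : ℤ) * ((k+2 : ℕ) : ℤ) - 2 * ((k+2 : ℕ) : ℤ)
          - 2 * ((m1+1 : ℕ) : ℤ) - 1) + 3 := by push_cast; ring
    rw [← zpow_natCast (2:ℚ) (m1*(2*(k+1))), hE,
      zpow_add₀ (by norm_num : (2:ℚ) ≠ 0)]
    norm_num
  linear_combination hQ + ((2:ℚ) ^ (2*(k+1)+2) - 1) * hpow
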